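/- arXiv:2111.14307 — 7 statements merged into one kernel-verified Lean document; each statement's English description precedes it below -/
import Mathlib

section
/- Let C1 and C2 be two distinct rigidity circuits on a common finite vertex type with a common edge e ∈ C1 ∩ C2. Then the combinatorial resultant CRes(C1, C2, e) = (C1 ∪ C2) \ {e} has at least 2|V(C1) ∪ V(C2)| − 2 edges; in particular it is a dependent edge set. -/
open Finset

variable {V : Type*} [Fintype V] [DecidableEq V]

/-- An edge set: a finite set of unordered pairs of distinct vertices (no loops). -/
def IsEdgeSet (E : Finset (Sym2 V)) : Prop := ∀ e ∈ E, ¬ e.IsDiag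

/-- The vertex span `V(E)`: vertices incident to at least one edge of `E`. -/
def vertexSpan (E : Finset (Sym2 V)) : Finset V :=
  Finset.univ.filter fun v => ∃ e ∈ E, v ∈ e

/-- `(2,3)`-sparsity: every nonempty subset `E' ⊆ E` has `|E'| ≤ 2|V(E')| - 3`. -/
def Sparse23 (E : Finset (Sym2 V)) : Prop :=
  ∀ E' ⊆ E, E'.Nonempty → (E'.card : ℤ) ≤ 2 * (vertexSpan E').card - 3

/-- An edge set is dependent if it is not `(2,3)`-sparse. -/
def DependentES (E : Finset (Sym2 V)) : Prop := ¬ Sparse23 E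

/-- A rigidity circuit: a dependent edge set all of whose proper subsets are `(2,3)`-sparse. -/
def IsRigidityCircuit (E : Finset (Sym2 V)) : Prop :=
  IsEdgeSet E ∧ DependentES E ∧ ∀ E' ⊂ E, Sparse23 E'

lemma vertexSpan_mono {E F : Finset (Sym2 V)} (h : E ⊆ F) :
    vertexSpan E ⊆ vertexSpan F := by
  intro v hv
  simp only [vertexSpan, mem_filter, mem_univ, true_and] at hv ⊢
  obtain ⟨f, hf, hvf⟩ := hv
  exact ⟨f, h hf, hvf⟩

lemma mem_vertexSpan {E : Finset (Sym2 V)} {f : Sym2 V} (hf : f ∈ E) {v : V} (hv : v ∈ f) :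
    v ∈ vertexSpan E := by
  simp only [vertexSpan, mem_filter, mem_univ, true_and]
  exact ⟨f, hf, hv⟩

lemma two_le_span_card {E : Finset (Sym2 V)} (hE : IsEdgeSet E) (hne : E.Nonempty) :
    2 ≤ (vertexSpan E).card := by
  obtain ⟨f, hf⟩ := hne
  induction f with
  | _ a b =>
    have hab : a ≠ b := by
      intro h; exact hE _ hf (by simp [h, Sym2.mk_isDiag_iff])
    have ha : a ∈ vertexSpan E := mem_vertexSpan hf (by simp)
    have hb : b ∈ vertexSpan E := mem_vertexSpan hf (by simp)
    calc 2 = ({a, b} : Finset V).card := by rw [card_insert_of_notMem (by simp [hab]), card_singleton]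
    _ ≤ _ := card_le_card (by intro x hx; simp at hx; rcases hx with h | h <;> simp [h, ha, hb])

lemma circuit_card_ge {C : Finset (Sym2 V)} (hC : IsRigidityCircuit C) :
    2 * ((vertexSpan C).card : ℤ) - 3 < C.card := by
  obtain ⟨hES, hdep, hmin⟩ := hC
  rw [DependentES, Sparse23] at hdep
  push_neg at hdep
  obtain ⟨E', hsub, hne, hlt⟩ := hdep
  have hEq : E' = C := by
    by_contra h
    exact absurd (hmin E' (ssubset_of_subset_of_ne hsub h) E' (Finset.Subset.refl _) hne)
      (not_le.mpr hlt)
  rw [hEq] at hlt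
  linarith

lemma circuit_nonempty {C : Finset (Sym2 V)} (hC : IsRigidityCircuit C) : C.Nonempty := by
  rcases C.eq_empty_or_nonempty with h | h
  · exact absurd (fun E' hs hne => absurd (subset_empty.mp (h ▸ hs)) hne.ne_empty) hC.2.1
  · exact h

lemma circuit_card_le {C : Finset (Sym2 V)} (hC : IsRigidityCircuit C) :
    (C.card : ℤ) ≤ 2 * (vertexSpan C).card - 2 := by
  have hne := circuit_nonempty hC
  obtain ⟨f, hf⟩ := hne
  have hspan := two_le_span_card hC.1 ⟨f, hf⟩
  have hcard : 2 ≤ C.card := by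
    have := circuit_card_ge hC
    omega
  have hss : C.erase f ⊂ C := erase_ssubset hf
  have hne' : (C.erase f).Nonempty := by
    rw [← card_pos, card_erase_of_mem hf]; omega
  have := hC.2.2 _ hss _ (Finset.Subset.refl _) hne'
  have hsp : (vertexSpan (C.erase f)).card ≤ (vertexSpan C).card :=
    card_le_card (vertexSpan_mono (erase_subset _ _))
  have hce : (C.erase f).card = C.card - 1 := card_erase_of_mem hf
  have : ((C.card : ℤ) - 1) ≤ 2 * (vertexSpan C).card - 3 := by
    push_cast [hce] at this ⊢
    omega
  linarith

/-- The combinatorial resultant of two distinct rigidity circuits on a common edge has at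
least `2|V(C1) ∪ V(C2)| - 2` edges; in particular it is dependent. -/
theorem combinatorialResultant_of_circuits_card_ge (C1 C2 : Finset (Sym2 V))
    (hC1 : IsRigidityCircuit C1) (hC2 : IsRigidityCircuit C2) (hne : C1 ≠ C2)
    (e : Sym2 V) (he : e ∈ C1 ∩ C2) :
    2 * ((vertexSpan C1 ∪ vertexSpan C2).card : ℤ) - 2 ≤ (((C1 ∪ C2) \ {e}).card : ℤ) ∧
      DependentES ((C1 ∪ C2) \ {e}) := by
  have h1 : (C1.card : ℤ) = 2 * (vertexSpan C1).card - 2 := by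
    have := circuit_card_ge hC1; have := circuit_card_le hC1; omega
  have h2 : (C2.card : ℤ) = 2 * (vertexSpan C2).card - 2 := by
    have := circuit_card_ge hC2; have := circuit_card_le hC2; omega
  -- C1 ∩ C2 is a proper nonempty subset of C1
  have hint_ss : C1 ∩ C2 ⊂ C1 := by
    refine ssubset_of_subset_of_ne (inter_subset_left) ?_
    intro h
    have hsub : C1 ⊆ C2 := by
      intro x hx; have := h ▸ hx; exact (mem_inter.mp ((h.symm ▸ hx : x ∈ C1 ∩ C2))).2
    exact hC1.2.1 (hC2.2.2 _ (ssubset_of_subset_of_ne hsub hne))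
  have hint_ne : (C1 ∩ C2).Nonempty := ⟨e, he⟩
  have hint_sparse : ((C1 ∩ C2).card : ℤ) ≤ 2 * (vertexSpan (C1 ∩ C2)).card - 3 :=
    hC1.2.2 _ hint_ss _ (Finset.Subset.refl _) hint_ne
  have hspan_int : vertexSpan (C1 ∩ C2) ⊆ vertexSpan C1 ∩ vertexSpan C2 := by
    intro v hv
    exact mem_inter.mpr ⟨vertexSpan_mono inter_subset_left hv,
      vertexSpan_mono inter_subset_right hv⟩
  have hspan_int_card : ((vertexSpan (C1 ∩ C2)).card : ℤ) ≤
      ((vertexSpan C1 ∩ vertexSpan C2).card : ℤ) := by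
    exact_mod_cast card_le_card hspan_int
  have hie : (C1 ∪ C2).card + (C1 ∩ C2).card = C1.card + C2.card :=
    card_union_add_card_inter _ _
  have hvie : (vertexSpan C1 ∪ vertexSpan C2).card + (vertexSpan C1 ∩ vertexSpan C2).card
      = (vertexSpan C1).card + (vertexSpan C2).card := card_union_add_card_inter _ _
  have heu : e ∈ C1 ∪ C2 := mem_union_left _ (mem_inter.mp he).1
  have hsd : ((C1 ∪ C2) \ {e}).card = (C1 ∪ C2).card - 1 := by
    rw [sdiff_singleton_eq_erase, card_erase_of_mem heu]
  have hcard1 : 1 ≤ (C1 ∪ C2).card := card_pos.mpr ⟨e, heu⟩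
  have hmain : 2 * ((vertexSpan C1 ∪ vertexSpan C2).card : ℤ) - 2 ≤
      (((C1 ∪ C2) \ {e}).card : ℤ) := by
    have hsd' : (((C1 ∪ C2) \ {e}).card : ℤ) = ((C1 ∪ C2).card : ℤ) - 1 := by
      rw [hsd]; omega
    have hie' : ((C1 ∪ C2).card : ℤ) + ((C1 ∩ C2).card : ℤ) = (C1.card : ℤ) + C2.card := by
      exact_mod_cast hie
    have hvie' : ((vertexSpan C1 ∪ vertexSpan C2).card : ℤ)
        + ((vertexSpan C1 ∩ vertexSpan C2).card : ℤ)
        = ((vertexSpan C1).card : ℤ) + (vertexSpan C2).card := by exact_mod_cast hvie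
    linarith
  refine ⟨hmain, ?_⟩
  intro hsparse
  have hRne : ((C1 ∪ C2) \ {e}).Nonempty := by
    rw [← card_pos]
    have h2span : 2 ≤ (vertexSpan C1 ∪ vertexSpan C2).card :=
      le_trans (two_le_span_card hC1.1 (circuit_nonempty hC1))
        (card_le_card subset_union_left)
    have : (2 : ℤ) ≤ (((C1 ∪ C2) \ {e}).card : ℤ) := by
      have : (2 : ℤ) ≤ ((vertexSpan C1 ∪ vertexSpan C2).card : ℤ) := by exact_mod_cast h2span
      linarith
    exact_mod_cast lt_of_lt_of_le (by norm_num : (0:ℤ) < 2) this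
  have hsp := hsparse _ (Finset.Subset.refl _) hRne
  have hspanR : vertexSpan ((C1 ∪ C2) \ {e}) ⊆ vertexSpan C1 ∪ vertexSpan C2 := by
    intro v hv
    simp only [vertexSpan, mem_filter, mem_univ, true_and] at hv
    obtain ⟨f, hf, hvf⟩ := hv
    rcases mem_union.mp (mem_sdiff.mp hf).1 with h | h
    · exact mem_union_left _ (mem_vertexSpan h hvf)
    · exact mem_union_right _ (mem_vertexSpan h hvf)
  have : ((vertexSpan ((C1 ∪ C2) \ {e})).card : ℤ) ≤
      ((vertexSpan C1 ∪ vertexSpan C2).card : ℤ) := by exact_mod_cast card_le_card hspanR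
  linarith
end

section
/- Let C1 and C2 be rigidity circuits on a common finite vertex type such that V(C1) ∩ V(C2) = {u, v} consists of exactly two vertices and C1 ∩ C2 = {uv} consists of exactly the edge uv. Then the 2-sum (C1 ∪ C2) \ {uv} is a rigidity circuit. -/
open Finset

variable {V : Type*} [Fintype V] [DecidableEq V]

lemma mem_vertexSpan_s4 {E : Finset (Sym2 V)} {w : V} :
    w ∈ vertexSpan E ↔ ∃ e ∈ E, w ∈ e := by simp [vertexSpan]
lemma vertexSpan_union (E F : Finset (Sym2 V)) :
    vertexSpan (E ∪ F) = vertexSpan E ∪ vertexSpan F := by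
  ext w; simp [mem_vertexSpan_s4, or_and_right, exists_or]
lemma vertexSpan_pair (a b : V) :
    vertexSpan ({s(a,b)} : Finset (Sym2 V)) = {a, b} := by
  ext w; simp [mem_vertexSpan_s4, Sym2.mem_iff]

lemma circuit_ge {C : Finset (Sym2 V)} (hC : IsRigidityCircuit C) :
    C.Nonempty ∧ (2 * ((vertexSpan C).card : ℤ) - 2 ≤ C.card) := by
  obtain ⟨hES, hdep, hmin⟩ := hC
  rw [DependentES, Sparse23] at hdep; push_neg at hdep
  obtain ⟨E', hsub, hne, hbig⟩ := hdep
  have hEq : E' = C := by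
    by_contra h
    exact absurd (hmin E' (ssubset_of_subset_of_ne hsub h) E' le_rfl hne) (by linarith)
  subst hEq
  exact ⟨hne, by linarith⟩

lemma circuit_one_lt {C : Finset (Sym2 V)} (hC : IsRigidityCircuit C) : 1 < C.card := by
  obtain ⟨hne, hge⟩ := circuit_ge hC
  by_contra h
  push_neg at h
  have h1 : C.card = 1 := le_antisymm h (card_pos.mpr hne)
  obtain ⟨f, hf⟩ := card_eq_one.mp h1
  have hdiag : ¬ f.IsDiag := hC.1 f (by simp [hf])
  induction f using Sym2.ind with
  | _ a b =>
    have hab : a ≠ b := by simpa using hdiag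
    apply hC.2.1
    intro E' hsub hne'
    have : E' = {s(a,b)} := by
      rw [hf] at hsub
      exact eq_of_subset_of_card_le hsub (by
        rw [card_singleton]; exact card_pos.mpr hne')
    rw [this, vertexSpan_pair, card_singleton, card_insert_of_notMem (by simpa using hab),
      card_singleton]
    norm_num

lemma circuit_card {C : Finset (Sym2 V)} (hC : IsRigidityCircuit C) :
    (C.card : ℤ) = 2 * (vertexSpan C).card - 2 := by
  obtain ⟨hne, hge⟩ := circuit_ge hC
  obtain ⟨f, hf⟩ := hne
  have herase : C.erase f ⊂ C := erase_ssubset hf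
  have hne' : (C.erase f).Nonempty := by
    rw [← card_pos, card_erase_of_mem hf]
    have := circuit_one_lt hC; omega
  have hb := hC.2.2 _ herase (C.erase f) le_rfl hne'
  have hcard : ((C.erase f).card : ℤ) = (C.card : ℤ) - 1 := by
    rw [card_erase_of_mem hf]
    have := circuit_one_lt hC
    push_cast [Nat.cast_sub (by omega : 1 ≤ C.card)]
    ring
  have hmono : ((vertexSpan (C.erase f)).card : ℤ) ≤ (vertexSpan C).card := by
    exact_mod_cast card_le_card (vertexSpan_mono (erase_subset f C))
  linarith

lemma vertexSpan_erase {C : Finset (Sym2 V)} (hC : IsRigidityCircuit C) {f : Sym2 V}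
    (hf : f ∈ C) : vertexSpan (C.erase f) = vertexSpan C := by
  refine subset_antisymm (vertexSpan_mono (erase_subset f C)) ?_
  intro w hw
  by_contra hw'
  have hsub : vertexSpan (C.erase f) ⊆ (vertexSpan C).erase w := by
    intro x hx
    rw [mem_erase]
    exact ⟨fun h => hw' (h ▸ hx), vertexSpan_mono (erase_subset f C) hx⟩
  have hcard : ((vertexSpan (C.erase f)).card : ℤ) ≤ (vertexSpan C).card - 1 := by
    have := card_le_card hsub
    rw [card_erase_of_mem hw] at this
    have hpos : 1 ≤ (vertexSpan C).card := card_pos.mpr ⟨w, hw⟩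
    omega
  have hne' : (C.erase f).Nonempty := by
    rw [← card_pos, card_erase_of_mem hf]
    have := circuit_one_lt hC; omega
  have hb := hC.2.2 _ (erase_ssubset hf) (C.erase f) le_rfl hne'
  have hcc := circuit_card hC
  have h1 : ((C.erase f).card : ℤ) = (C.card : ℤ) - 1 := by
    rw [card_erase_of_mem hf]
    push_cast [Nat.cast_sub (by have := circuit_one_lt hC; omega : 1 ≤ C.card)]
    ring
  linarith

lemma subcircuit_bound {C A : Finset (Sym2 V)} {u v : V} (hC : IsRigidityCircuit C)
    (he : s(u,v) ∈ C) (hA : A ⊆ C.erase s(u,v)) (hne : A ≠ C.erase s(u,v))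
    (hu : u ∈ vertexSpan A) (hv : v ∈ vertexSpan A) :
    (A.card : ℤ) ≤ 2 * (vertexSpan A).card - 4 := by
  have heA : s(u,v) ∉ A := fun h => by simpa using (mem_erase.mp (hA h)).1
  have hss : insert s(u,v) A ⊂ C := by
    refine ssubset_of_subset_of_ne (insert_subset he (hA.trans (erase_subset _ _))) ?_
    intro h
    apply hne
    rw [← h, erase_insert heA]
  have hb := hC.2.2 _ hss (insert s(u,v) A) le_rfl (insert_nonempty _ _)
  have hs : vertexSpan (insert s(u,v) A) = vertexSpan A := by
    rw [insert_eq, vertexSpan_union, vertexSpan_pair]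
    rw [union_eq_right.mpr]
    intro x hx
    rcases mem_insert.mp hx with h | h
    · exact h ▸ hu
    · exact (mem_singleton.mp h) ▸ hv
  rw [hs, card_insert_of_notMem heA] at hb
  push_cast at hb
  linarith

/-- The 2-sum of two rigidity circuits sharing exactly two vertices `u, v` and exactly the
edge `uv` is a rigidity circuit. -/
theorem twoSum_of_circuits_isCircuit (C1 C2 : Finset (Sym2 V)) (u v : V) (huv : u ≠ v)
    (hC1 : IsRigidityCircuit C1) (hC2 : IsRigidityCircuit C2)
    (hV : vertexSpan C1 ∩ vertexSpan C2 = {u, v})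
    (hE : C1 ∩ C2 = {s(u, v)}) :
    IsRigidityCircuit ((C1 ∪ C2) \ {s(u, v)}) := by
  have he1 : s(u,v) ∈ C1 := (mem_inter.mp (hE ▸ mem_singleton_self _)).1
  have he2 : s(u,v) ∈ C2 := (mem_inter.mp (hE ▸ mem_singleton_self _)).2
  have hD : (C1 ∪ C2) \ {s(u,v)} = C1.erase s(u,v) ∪ C2.erase s(u,v) := by
    rw [sdiff_singleton_eq_erase, erase_union_distrib]
  set D := (C1 ∪ C2) \ {s(u,v)} with hDdef
  -- vertex span of D
  have hs1 : vertexSpan (C1.erase s(u,v)) = vertexSpan C1 := vertexSpan_erase hC1 he1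
  have hs2 : vertexSpan (C2.erase s(u,v)) = vertexSpan C2 := vertexSpan_erase hC2 he2
  have hVD : vertexSpan D = vertexSpan C1 ∪ vertexSpan C2 := by
    rw [hD, vertexSpan_union, hs1, hs2]
  -- cardinalities
  have hc1 := circuit_card hC1
  have hc2 := circuit_card hC2
  have huvcard : ({u, v} : Finset V).card = 2 := by
    rw [card_insert_of_notMem (by simpa using huv), card_singleton]
  have hVDcard : ((vertexSpan D).card : ℤ)
      = (vertexSpan C1).card + (vertexSpan C2).card - 2 := by
    have := card_union_add_card_inter (vertexSpan C1) (vertexSpan C2)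
    rw [hV, huvcard] at this
    rw [hVD]
    omega
  have hdisj : Disjoint (C1.erase s(u,v)) (C2.erase s(u,v)) := by
    rw [disjoint_left]
    intro a ha1 ha2
    have : a ∈ C1 ∩ C2 := mem_inter.mpr ⟨(mem_erase.mp ha1).2, (mem_erase.mp ha2).2⟩
    rw [hE, mem_singleton] at this
    exact (mem_erase.mp ha1).1 this
  have hDcard : (D.card : ℤ) = (C1.card : ℤ) + C2.card - 2 := by
    rw [hD, card_union_of_disjoint hdisj, card_erase_of_mem he1, card_erase_of_mem he2]
    have h1 := circuit_one_lt hC1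
    have h2 := circuit_one_lt hC2
    push_cast
    omega
  have hDsize : (D.card : ℤ) = 2 * (vertexSpan D).card - 2 := by
    rw [hDcard, hVDcard]; linarith
  have hDne : D.Nonempty := by
    rw [← card_pos]
    have h1 := circuit_one_lt hC1
    have h2 := circuit_one_lt hC2
    have : (0:ℤ) < D.card := by
      rw [hDcard]; omega
    exact_mod_cast this
  -- key: every proper subset of D satisfies the sparsity count
  have key : ∀ F, F ⊂ D → F.Nonempty → (F.card : ℤ) ≤ 2 * (vertexSpan F).card - 3 := by
    intro F hF hFne
    set A := F ∩ C1 with hAdef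
    set B := F ∩ C2 with hBdef
    have hFD : F ⊆ D := hF.subset
    have heF : s(u,v) ∉ F := fun h => by
      have := hFD h
      rw [hDdef, mem_sdiff] at this
      exact this.2 (mem_singleton_self _)
    have hFAB : A ∪ B = F := by
      rw [hAdef, hBdef, ← inter_union_distrib_left]
      refine inter_eq_left.mpr (hFD.trans ?_)
      rw [hDdef]; exact sdiff_subset
    have hAe : A ⊆ C1.erase s(u,v) := fun a ha => mem_erase.mpr
      ⟨fun h => heF (h ▸ (mem_inter.mp ha).1), (mem_inter.mp ha).2⟩
    have hBe : B ⊆ C2.erase s(u,v) := fun a ha => mem_erase.mpr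
      ⟨fun h => heF (h ▸ (mem_inter.mp ha).1), (mem_inter.mp ha).2⟩
    have hAss : A ⊂ C1 := ssubset_of_subset_of_ne (inter_subset_right)
      (fun h => (mem_erase.mp (hAe (h ▸ he1))).1 rfl)
    have hBss : B ⊂ C2 := ssubset_of_subset_of_ne (inter_subset_right)
      (fun h => (mem_erase.mp (hBe (h ▸ he2))).1 rfl)
    rcases A.eq_empty_or_nonempty with hAem | hAne
    · -- F = B
      have : F = B := by rw [← hFAB, hAem, empty_union]
      rw [this]
      exact hC2.2.2 B hBss B le_rfl (this ▸ hFne)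
    rcases B.eq_empty_or_nonempty with hBem | hBne
    · have : F = A := by rw [← hFAB, hBem, union_empty]
      rw [this]
      exact hC1.2.2 A hAss A le_rfl (this ▸ hFne)
    -- both nonempty
    have sA : (A.card : ℤ) ≤ 2 * (vertexSpan A).card - 3 := hC1.2.2 A hAss A le_rfl hAne
    have sB : (B.card : ℤ) ≤ 2 * (vertexSpan B).card - 3 := hC2.2.2 B hBss B le_rfl hBne
    have hABdisj : Disjoint A B := hdisj.mono hAe hBe
    have hFcard : (F.card : ℤ) = A.card + B.card := by
      rw [← hFAB, card_union_of_disjoint hABdisj]; push_cast; ring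
    have hVF : vertexSpan F = vertexSpan A ∪ vertexSpan B := by
      rw [← hFAB, vertexSpan_union]
    have hinter_sub : vertexSpan A ∩ vertexSpan B ⊆ {u, v} := by
      rw [← hV]
      exact inter_subset_inter (vertexSpan_mono inter_subset_right)
        (vertexSpan_mono inter_subset_right)
    have hk : (vertexSpan A ∩ vertexSpan B).card ≤ 2 := by
      have := card_le_card hinter_sub
      rwa [huvcard] at this
    have hunion : ((vertexSpan F).card : ℤ)
        = (vertexSpan A).card + (vertexSpan B).card
          - (vertexSpan A ∩ vertexSpan B).card := by
      have := card_union_add_card_inter (vertexSpan A) (vertexSpan B)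
      rw [hVF]; omega
    by_cases hk2 : (vertexSpan A ∩ vertexSpan B).card = 2
    · have hiuv : vertexSpan A ∩ vertexSpan B = {u, v} :=
        eq_of_subset_of_card_le hinter_sub (by omega)
      have huA : u ∈ vertexSpan A := (mem_inter.mp (hiuv ▸ (by simp : u ∈ ({u,v}:Finset V)))).1
      have huB : u ∈ vertexSpan B := (mem_inter.mp (hiuv ▸ (by simp : u ∈ ({u,v}:Finset V)))).2
      have hvA : v ∈ vertexSpan A := (mem_inter.mp (hiuv ▸ (by simp : v ∈ ({u,v}:Finset V)))).1
      have hvB : v ∈ vertexSpan B := (mem_inter.mp (hiuv ▸ (by simp : v ∈ ({u,v}:Finset V)))).2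
      by_cases hAfull : A = C1.erase s(u,v)
      · have hBne' : B ≠ C2.erase s(u,v) := by
          intro hBfull
          apply hF.ne
          rw [← hFAB, hAfull, hBfull, ← hD]
        have := subcircuit_bound hC2 he2 hBe hBne' huB hvB
        rw [hFcard, hunion]
        linarith
      · have := subcircuit_bound hC1 he1 hAe hAfull huA hvA
        rw [hFcard, hunion]
        linarith
    · have : (vertexSpan A ∩ vertexSpan B).card ≤ 1 := by omega
      rw [hFcard, hunion]
      have : ((vertexSpan A ∩ vertexSpan B).card : ℤ) ≤ 1 := by exact_mod_cast this
      linarith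
  refine ⟨?_, ?_, ?_⟩
  · intro e he
    rw [hDdef, mem_sdiff, mem_union] at he
    rcases he.1 with h | h
    · exact hC1.1 e h
    · exact hC2.1 e h
  · intro hsp
    have := hsp D le_rfl hDne
    rw [hDsize] at this
    linarith
  · intro E' hE' F hF hFne
    exact key F (lt_of_le_of_lt hF hE') hFne
end

section
/- (Cayley's theorem on distance matrices.) Let p : Fin n → ℝ^d be any n points in d-dimensional Euclidean space, and let B be the (n+1) × (n+1) real matrix defined by: B 0 0 = 0; B 0 (j+1) = 1 and B (i+1) 0 = 1 for all i, j ∈ Fin n; and B (i+1) (j+1) = ‖p i − p j‖², the squared Euclidean distance between p i and p j. Then the rank of B is at most d + 2. -/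
lemma matrix_rank_add_le {m n : Type*} [Fintype m] [Fintype n]
    (A B : Matrix m n ℝ) : (A + B).rank ≤ A.rank + B.rank := by
  simp only [Matrix.rank]
  have h : LinearMap.range (A + B).mulVecLin ≤
      LinearMap.range A.mulVecLin ⊔ LinearMap.range B.mulVecLin := by
    rw [Matrix.mulVecLin_add]
    rintro x ⟨v, rfl⟩
    exact Submodule.add_mem_sup ⟨v, rfl⟩ ⟨v, rfl⟩
  exact le_trans (Submodule.finrank_mono h)
    (Submodule.finrank_add_le_finrank_add_finrank _ _)

lemma rank_sum_le' {m : Type*} [Fintype m] {ι : Type*} (s : Finset ι)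
    (f : ι → Matrix m m ℝ) : (∑ i ∈ s, f i).rank ≤ ∑ i ∈ s, (f i).rank := by
  classical
  induction s using Finset.induction with
  | empty => simp [Matrix.rank_zero]
  | insert _ _ h ih =>
    rw [Finset.sum_insert h, Finset.sum_insert h]
    exact le_trans (matrix_rank_add_le _ _) (by omega)


lemma rank_vecMulVec_le {m n : Type*} [Fintype m] [Fintype n]
    (u : m → ℝ) (v : n → ℝ) : (Matrix.vecMulVec u v).rank ≤ 1 := by
  rw [Matrix.vecMulVec_eq (Fin 1)]
  exact le_trans (Matrix.rank_mul_le_left _ _)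
    (le_trans (Matrix.rank_le_card_width _) (by simp))

/-- Cayley's theorem on distance matrices: the bordered matrix of squared distances of `n`
points in `ℝ^d` has rank at most `d + 2`. -/
theorem cayley_rank_le (n d : ℕ) (p : Fin n → EuclideanSpace ℝ (Fin d))
    (B : Matrix (Fin (n + 1)) (Fin (n + 1)) ℝ)
    (h00 : B 0 0 = 0)
    (h0row : ∀ j : Fin n, B 0 j.succ = 1)
    (h0col : ∀ i : Fin n, B i.succ 0 = 1)
    (hdist : ∀ i j : Fin n, B i.succ j.succ = ‖p i - p j‖ ^ 2) :
    B.rank ≤ d + 2 := by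
  classical
  set x : Fin (n + 1) → ℝ := Fin.cons 1 (fun i => ‖p i‖ ^ 2) with hx
  set y : Fin (n + 1) → ℝ := Fin.cons 0 (fun _ => 1) with hy
  set q : Fin d → Fin (n + 1) → ℝ := fun k => Fin.cons 0 (fun i => p i k) with hq
  have hB : B = Matrix.vecMulVec x y + Matrix.vecMulVec y x +
      ∑ k : Fin d, Matrix.vecMulVec (fun i => (-2 : ℝ) * q k i) (q k) := by
    ext i j
    simp only [Matrix.add_apply, Matrix.sum_apply, Matrix.vecMulVec_apply]
    induction i using Fin.cases with
    | zero =>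
      induction j using Fin.cases with
      | zero => simp [h00, hx, hy, hq]
      | succ j => simp [h0row j, hx, hy, hq]
    | succ i =>
      induction j using Fin.cases with
      | zero => simp [h0col i, hx, hy, hq]
      | succ j =>
        have hexp : ‖p i - p j‖ ^ 2 =
            ‖p i‖ ^ 2 - 2 * inner ℝ (p i) (p j) + ‖p j‖ ^ 2 :=
          norm_sub_sq_real (p i) (p j)
        have hin : (inner ℝ (p i) (p j) : ℝ) = ∑ k : Fin d, p i k * p j k := by
          simp [PiLp.inner_apply, mul_comm]
        rw [hdist i j, hexp, hin]
        simp only [hx, hy, hq, Fin.cons_succ]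
        have hs : ∑ k : Fin d, (-2 : ℝ) * p i k * p j k =
            -(2 * ∑ k : Fin d, p i k * p j k) := by
          rw [Finset.mul_sum, ← Finset.sum_neg_distrib]
          exact Finset.sum_congr rfl (fun k _ => by ring)
        rw [hs]
        ring
  rw [hB]
  have h3 : (∑ k : Fin d, Matrix.vecMulVec (fun i => (-2 : ℝ) * q k i) (q k)).rank ≤ d := by
    refine le_trans (rank_sum_le' Finset.univ _) ?_
    calc ∑ k : Fin d, (Matrix.vecMulVec (fun i => (-2 : ℝ) * q k i) (q k)).rank
        ≤ ∑ _k : Fin d, 1 := Finset.sum_le_sum (fun k _ => rank_vecMulVec_le _ _)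
      _ = d := by simp
  have h1 := rank_vecMulVec_le x y
  have h2 := rank_vecMulVec_le y x
  have h4 : (Matrix.vecMulVec x y + Matrix.vecMulVec y x).rank ≤ 2 :=
    le_trans (matrix_rank_add_le _ _) (by omega)
  exact le_trans (matrix_rank_add_le _ _) (by omega)
end

section
/- (Dress–Lovász uniqueness of circuit polynomials.) Let F be a field, σ a finite type, and I a prime ideal of the multivariate polynomial ring F[x_s : s ∈ σ]. Let C ⊆ σ be a circuit of I, i.e.: there exists a nonzero p ∈ I whose set of variables equals C, and no nonzero q ∈ I has its set of variables strictly contained in C. Then any two irreducible polynomials p, q ∈ I whose sets of variables are contained in C are equal up to multiplication by a nonzero constant of F (i.e., p = c • q for some nonzero c ∈ F). -/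
open MvPolynomial

private lemma mv_degreeOf_eq_zero_iff {F σ : Type*} [CommSemiring F] [DecidableEq σ]
    (i : σ) (f : MvPolynomial σ F) : f.degreeOf i = 0 ↔ i ∉ f.vars := by
  rw [degreeOf_def, Multiset.count_eq_zero, vars_def, Multiset.mem_toFinset]

private lemma mv_isUnit_fin {F : Type*} [Field F] :
    ∀ (m : ℕ) (x : MvPolynomial (Fin m) F), IsUnit x → ∃ c : F, x = MvPolynomial.C c := by
  intro m
  induction m with
  | zero =>
    intro x _
    exact ⟨constantCoeff x, x.eq_C_of_isEmpty⟩
  | succ m ih =>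
    intro x hx
    have hx' : IsUnit (finSuccEquiv F m x) :=
      hx.map (finSuccEquiv F m).toRingEquiv
    obtain ⟨r, hru, hrx⟩ := Polynomial.isUnit_iff.mp hx'
    obtain ⟨c, hc⟩ := ih r hru
    refine ⟨c, ?_⟩
    have h1 := congrArg (finSuccEquiv F m).symm hrx
    rw [AlgEquiv.symm_apply_apply] at h1
    rw [← h1, hc]
    exact RingHom.congr_fun (finSuccEquiv_comp_C_eq_C (R := F) m) c

private lemma mv_unit_eq_C {F σ : Type*} [Field F] [Fintype σ] {x : MvPolynomial σ F}
    (hx : IsUnit x) : ∃ c : F, c ≠ 0 ∧ x = MvPolynomial.C c := by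
  classical
  set e := renameEquiv F (Fintype.equivFin σ) with he
  have hy : IsUnit (e x) := hx.map e.toRingEquiv
  obtain ⟨c, hc⟩ := mv_isUnit_fin _ _ hy
  have hxc : x = C c := by
    apply e.injective
    rw [hc, he, renameEquiv_apply, rename_C]
  refine ⟨c, ?_, hxc⟩
  rintro rfl
  rw [map_zero] at hxc
  exact not_isUnit_zero (hxc ▸ hx)

private lemma mv_irreducible_of_rename {F σ τ : Type*} [Field F] [Fintype σ]
    {g : τ → σ} (hg : Function.Injective g) {a : MvPolynomial τ F}
    (h : Irreducible (rename g a)) : Irreducible a := by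
  classical
  have key : ∀ z : MvPolynomial τ F, IsUnit (rename g z) → IsUnit z := by
    intro z hz
    obtain ⟨c, hc0, hc⟩ := mv_unit_eq_C hz
    have hzc : z = C c := rename_injective g hg (by rw [hc, rename_C])
    rw [hzc]
    exact (isUnit_iff_ne_zero.mpr hc0).map (C : F →+* MvPolynomial τ F)
  constructor
  · intro ha
    exact h.not_isUnit (ha.map (rename g))
  · intro x y hxy
    have := h.isUnit_or_isUnit (by rw [hxy, map_mul])
    exact this.imp (key x) (key y)

/-- Dress–Lovász uniqueness of circuit polynomials: if `C` is a circuit of a prime ideal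
`I` of `F[x_s : s ∈ σ]`, then any two irreducible polynomials of `I` with variables
contained in `C` agree up to a nonzero constant factor. -/
theorem circuitPolynomial_unique {F : Type*} [Field F] {σ : Type*} [Fintype σ]
    [DecidableEq σ] (I : Ideal (MvPolynomial σ F)) (hI : I.IsPrime) (C : Finset σ)
    (hC : ∃ p ∈ I, p ≠ 0 ∧ p.vars = C)
    (hCmin : ∀ q ∈ I, q ≠ 0 → ¬ q.vars ⊂ C)
    (p q : MvPolynomial σ F) (hp : p ∈ I) (hq : q ∈ I)
    (hpirr : Irreducible p) (hqirr : Irreducible q)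
    (hpv : p.vars ⊆ C) (hqv : q.vars ⊆ C) :
    ∃ c : F, c ≠ 0 ∧ p = c • q := by
  classical
  have hp0 : p ≠ 0 := hpirr.ne_zero
  have hq0 : q ≠ 0 := hqirr.ne_zero
  have hpvC : p.vars = C := by
    by_contra h
    exact hCmin p hp hp0 (lt_of_le_of_ne hpv h)
  have hqvC : q.vars = C := by
    by_contra h
    exact hCmin q hq hq0 (lt_of_le_of_ne hqv h)
  -- `C` is nonempty
  have hCcard : C.card ≠ 0 := by
    intro h
    rw [Finset.card_eq_zero] at h
    have hve : p.vars = ∅ := by rw [hpvC, h]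
    have hmem : p ∈ supported F (∅ : Set σ) := mem_supported.mpr (by simp [hve])
    rw [supported_empty, Algebra.mem_bot] at hmem
    obtain ⟨c, hc⟩ := hmem
    have hc0 : c ≠ 0 := by rintro rfl; rw [map_zero] at hc; exact hp0 hc.symm
    exact hpirr.not_isUnit
      (by rw [← hc]; exact (isUnit_iff_ne_zero.mpr hc0).map (algebraMap F (MvPolynomial σ F)))
  obtain ⟨n, hn⟩ := Nat.exists_eq_succ_of_ne_zero hCcard
  -- an enumeration of `C`
  set e₀ : Fin (n + 1) ≃ {x // x ∈ C} :=
    (Fintype.equivFinOfCardEq (by rw [Fintype.card_coe, hn])).symm with he₀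
  set g : Fin (n + 1) → σ := fun j => (e₀ j : σ) with hg
  have hginj : Function.Injective g := Subtype.val_injective.comp e₀.injective
  have hgC : ∀ j, g j ∈ C := fun j => (e₀ j).2
  have hrange : Set.range g = ↑C := by
    ext i
    constructor
    · rintro ⟨j, rfl⟩; exact hgC j
    · intro hi; exact ⟨e₀.symm ⟨i, hi⟩, by simp [hg]⟩
  obtain ⟨p', hp'⟩ := exists_rename_eq_of_vars_subset_range p g hginj
    (by rw [hrange]; exact Finset.coe_subset.mpr hpv)
  obtain ⟨q', hq'⟩ := exists_rename_eq_of_vars_subset_range q g hginj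
    (by rw [hrange]; exact Finset.coe_subset.mpr hqv)
  have hp'irr : Irreducible p' := mv_irreducible_of_rename hginj (hp'.symm ▸ hpirr)
  have hq'irr : Irreducible q' := mv_irreducible_of_rename hginj (hq'.symm ▸ hqirr)
  -- variable `0` occurs in every nonzero element of `I` supported on `C`
  have hvars0 : ∀ (r' : MvPolynomial (Fin (n + 1)) F) (r : MvPolynomial σ F),
      r.vars = C → rename g r' = r → (0 : Fin (n + 1)) ∈ r'.vars := by
    intro r' r hrv hren
    by_contra h0
    have hsub : r.vars ⊆ C.erase (g 0) := by
      intro i hi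
      rw [← hren] at hi
      obtain ⟨j, hj, rfl⟩ := Finset.mem_image.mp (vars_rename g r' hi)
      exact Finset.mem_erase.mpr ⟨fun he => h0 (hginj he ▸ hj), hgC j⟩
    have hsub' : C ⊆ C.erase (g 0) := hrv ▸ hsub
    exact absurd (hsub' (hgC 0)) (Finset.notMem_erase _ _)
  have h0p : (0 : Fin (n + 1)) ∈ p'.vars := hvars0 p' p hpvC hp'
  have h0q : (0 : Fin (n + 1)) ∈ q'.vars := hvars0 q' q hqvC hq'
  -- move to polynomials in one variable over `R₀`
  set R₀ := MvPolynomial (Fin n) F with hR₀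
  letI : NormalizationMonoid R₀ := UniqueFactorizationMonoid.normalizationMonoid.toNormalizationMonoid
  letI : NormalizedGCDMonoid R₀ := UniqueFactorizationMonoid.toNormalizedGCDMonoid R₀
  set K := FractionRing R₀ with hK
  set P : Polynomial R₀ := finSuccEquiv F n p' with hP
  set Q : Polynomial R₀ := finSuccEquiv F n q' with hQ
  have Pirr : Irreducible P := (MulEquiv.irreducible_iff (finSuccEquiv F n).toRingEquiv.toMulEquiv).mpr hp'irr
  have Qirr : Irreducible Q := (MulEquiv.irreducible_iff (finSuccEquiv F n).toRingEquiv.toMulEquiv).mpr hq'irr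
  have degP : P.natDegree ≠ 0 := by
    rw [hP, natDegree_finSuccEquiv]
    intro h
    exact (mv_degreeOf_eq_zero_iff 0 p').mp h h0p
  have degQ : Q.natDegree ≠ 0 := by
    rw [hQ, natDegree_finSuccEquiv]
    intro h
    exact (mv_degreeOf_eq_zero_iff 0 q').mp h h0q
  have prim : ∀ T : Polynomial R₀, Irreducible T → T.natDegree ≠ 0 → T.IsPrimitive := by
    intro T Tirr degT r hr
    obtain ⟨t, ht⟩ := hr
    rcases Tirr.isUnit_or_isUnit ht with h | h
    · exact Polynomial.isUnit_C.mp h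
    · exfalso
      apply degT
      rw [ht]
      have h1 : t.natDegree = 0 := Polynomial.natDegree_eq_zero_of_isUnit h
      exact Nat.le_zero.mp (by
        simpa [Polynomial.natDegree_C, h1] using
          Polynomial.natDegree_mul_le (p := Polynomial.C r) (q := t))
  have Pprim : P.IsPrimitive := prim P Pirr degP
  have Qprim : Q.IsPrimitive := prim Q Qirr degQ
  set φ := algebraMap R₀ K with hφ
  have hφinj : Function.Injective φ := IsFractionRing.injective R₀ K
  set Pk := P.map φ with hPk
  set Qk := Q.map φ with hQk
  have PkIrr : Irreducible Pk := (Pprim.irreducible_iff_irreducible_map_fraction_map (K := K)).mp Pirr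
  by_cases hdvd : Pk ∣ Qk
  · -- `P` divides `Q`, hence they are associated and we conclude
    have hPQ : P ∣ Q := Pprim.dvd_of_fraction_map_dvd_fraction_map hdvd
    obtain ⟨t, ht⟩ := hPQ
    have htu : IsUnit t := (Qirr.isUnit_or_isUnit ht).resolve_left Pirr.not_isUnit
    have htu' : IsUnit ((finSuccEquiv F n).symm t) :=
      htu.map (finSuccEquiv F n).symm.toRingEquiv
    obtain ⟨c, hc⟩ := mv_isUnit_fin _ _ htu'
    have hc0 : c ≠ 0 := by
      rintro rfl
      rw [map_zero] at hc
      exact not_isUnit_zero (hc ▸ htu')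
    have hq'eq : q' = p' * MvPolynomial.C c := by
      apply (finSuccEquiv F n).injective
      rw [map_mul, ← hc, AlgEquiv.apply_symm_apply, ← hP, ← hQ]
      exact ht
    refine ⟨c⁻¹, inv_ne_zero hc0, ?_⟩
    have hqp : q = p * MvPolynomial.C c := by
      rw [← hp', ← hq', hq'eq, map_mul, rename_C]
    rw [smul_eq_C_mul, hqp, mul_comm p (MvPolynomial.C c), ← mul_assoc, ← map_mul,
      inv_mul_cancel₀ hc0, map_one, one_mul]
  · -- otherwise `Pk` and `Qk` are coprime, contradicting minimality of `C`
    have hcop : IsCoprime Pk Qk := PkIrr.coprime_iff_not_dvd.mpr hdvd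
    obtain ⟨a, b, hab⟩ := hcop
    obtain ⟨da, hda⟩ := IsLocalization.integerNormalization_map_to_map (nonZeroDivisors R₀) a
    obtain ⟨db, hdb⟩ := IsLocalization.integerNormalization_map_to_map (nonZeroDivisors R₀) b
    set A := IsLocalization.integerNormalization (nonZeroDivisors R₀) a with hA
    set B := IsLocalization.integerNormalization (nonZeroDivisors R₀) b with hB
    have hda' : A.map φ = Polynomial.C (φ da) * a := by
      rw [hda, ← algebraMap_smul K ((da : R₀)) a, Algebra.smul_def, Polynomial.algebraMap_eq]
    have hdb' : B.map φ = Polynomial.C (φ db) * b := by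
      rw [hdb, ← algebraMap_smul K ((db : R₀)) b, Algebra.smul_def, Polynomial.algebraMap_eq]
    set E : Polynomial R₀ := A * Polynomial.C (db : R₀) * P + B * Polynomial.C (da : R₀) * Q
      with hE
    have hEC : E = Polynomial.C ((da : R₀) * (db : R₀)) := by
      apply Polynomial.map_injective φ hφinj
      rw [hE, Polynomial.map_add, Polynomial.map_mul, Polynomial.map_mul, Polynomial.map_mul,
        Polynomial.map_mul, hda', hdb', Polynomial.map_C, Polynomial.map_C, Polynomial.map_C,
        map_mul, Polynomial.C_mul, ← hPk, ← hQk]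
      linear_combination (Polynomial.C (φ da) * Polynomial.C (φ db)) * hab
    have hr0 : (da : R₀) * (db : R₀) ≠ 0 :=
      mul_ne_zero (nonZeroDivisors.coe_ne_zero da) (nonZeroDivisors.coe_ne_zero db)
    have hE0 : E ≠ 0 := by
      rw [hEC]
      exact fun h => hr0 (Polynomial.C_injective (by rw [h, map_zero]))
    set d' := (finSuccEquiv F n).symm E with hd'
    have hd'0 : d' ≠ 0 := fun h => hE0 (by
      rw [← (finSuccEquiv F n).apply_symm_apply E, ← hd', h, map_zero])
    have hd'decomp : d' = (finSuccEquiv F n).symm (A * Polynomial.C (db : R₀)) * p'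
        + (finSuccEquiv F n).symm (B * Polynomial.C (da : R₀)) * q' := by
      apply (finSuccEquiv F n).injective
      simp only [AlgEquiv.apply_symm_apply, map_add, map_mul]
      rw [← hP, ← hQ, ← hE, hd', AlgEquiv.apply_symm_apply]
    set d := rename g d' with hd
    have hdI : d ∈ I := by
      rw [hd, hd'decomp]
      simp only [map_add, map_mul]
      rw [hp', hq']
      exact I.add_mem (I.mul_mem_left _ hp) (I.mul_mem_left _ hq)
    have hd0 : d ≠ 0 := fun h => hd'0 (rename_injective g hginj (by rwa [map_zero]))
    have h0d' : (0 : Fin (n + 1)) ∉ d'.vars := by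
      rw [← mv_degreeOf_eq_zero_iff]
      have := natDegree_finSuccEquiv (R := F) d'
      rw [hd'] at this ⊢
      rw [← this, AlgEquiv.apply_symm_apply, hEC, Polynomial.natDegree_C]
    have hdsub : d.vars ⊆ C.erase (g 0) := by
      intro i hi
      rw [hd] at hi
      obtain ⟨j, hj, rfl⟩ := Finset.mem_image.mp (vars_rename g d' hi)
      refine Finset.mem_erase.mpr ⟨fun he => h0d' (hginj he ▸ hj), hgC j⟩
    have hssub : d.vars ⊂ C :=
      lt_of_le_of_lt hdsub (Finset.erase_ssubset (hgC 0))
    exact absurd hssub (hCmin d hdI hd0)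
end

section
/- Let F be a field, σ a finite type, and I a prime ideal of the multivariate polynomial ring F[x_s : s ∈ σ]. Let C ⊆ σ be a circuit of I, i.e.: there exists a nonzero p ∈ I whose set of variables equals C, and no nonzero q ∈ I has its set of variables strictly contained in C. Then the elimination ideal I ∩ F[x_s : s ∈ C] (the preimage of I under the inclusion F[x_s : s ∈ C] → F[x_s : s ∈ σ] given by renaming along the inclusion C ↪ σ) is a principal ideal, generated by an irreducible polynomial whose set of variables is exactly C. -/
open MvPolynomial

theorem core_dvd {A : Type*} [CommRing A] [IsDomain A] [UniqueFactorizationMonoid A]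
    {J : Ideal (Polynomial A)}
    (hconst : ∀ a : A, Polynomial.C a ∈ J → a = 0)
    {g : Polynomial A} (hg : Prime g) (hgJ : g ∈ J) (hgdeg : g.natDegree ≠ 0)
    {h : Polynomial A} (hh : h ∈ J) : g ∣ h := by
  classical
  letI : NormalizationMonoid A := UniqueFactorizationMonoid.normalizationMonoid.toNormalizationMonoid
  letI : NormalizedGCDMonoid A := UniqueFactorizationMonoid.toNormalizedGCDMonoid A
  set K := FractionRing A
  have hg0 : g ≠ 0 := hg.ne_zero
  have hgirr : Irreducible g := hg.irreducible
  have hgprim : g.IsPrimitive := by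
    intro r hr
    obtain ⟨q, hq⟩ := hr
    rcases hgirr.isUnit_or_isUnit hq with hu | hu
    · exact Polynomial.isUnit_C.mp hu
    · exfalso
      have hr0 : r ≠ 0 := by rintro rfl; simp at hq; exact hg0 hq
      have hq0 : q ≠ 0 := by rintro rfl; simp at hq; exact hg0 hq
      have hC0 : Polynomial.C r ≠ (0 : Polynomial A) := by simpa using hr0
      have : g.natDegree = 0 := by
        rw [hq, Polynomial.natDegree_mul hC0 hq0, Polynomial.natDegree_C,
          Polynomial.natDegree_eq_zero_of_isUnit hu]
      exact hgdeg this
  have hGirr : Irreducible (g.map (algebraMap A K)) :=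
    (hgprim.irreducible_iff_irreducible_map_fraction_map (K := K)).mp hgirr
  by_cases hh0 : h = 0
  · simp [hh0]
  by_cases hdvd : g.map (algebraMap A K) ∣ h.map (algebraMap A K)
  · -- transfer divisibility back
    have hc0 : (h.content : A) ≠ 0 := by
      simpa [Polynomial.content_eq_zero_iff] using hh0
    have hcu : IsUnit (Polynomial.C (algebraMap A K h.content)) := by
      refine Polynomial.isUnit_C.mpr (isUnit_iff_ne_zero.mpr fun he => hc0 ?_)
      exact IsFractionRing.injective A K (by rw [he, map_zero])
    have hdvd' : g.map (algebraMap A K) ∣ h.primPart.map (algebraMap A K) := by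
      have hdecomp : h.map (algebraMap A K) =
          Polynomial.C (algebraMap A K h.content) * h.primPart.map (algebraMap A K) := by
        conv_lhs => rw [h.eq_C_content_mul_primPart]
        rw [Polynomial.map_mul, Polynomial.map_C]
      rw [hdecomp] at hdvd
      exact hcu.dvd_mul_left.mp hdvd
    have : g ∣ h.primPart :=
      hgprim.dvd_of_fraction_map_dvd_fraction_map hdvd'
    exact this.trans h.primPart_dvd
  · exfalso
    have hcop : IsCoprime (g.map (algebraMap A K)) (h.map (algebraMap A K)) :=
      hGirr.coprime_iff_not_dvd.mpr hdvd
    obtain ⟨u, v, huv⟩ := hcop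
    obtain ⟨bu, hbu⟩ := IsLocalization.integerNormalization_map_to_map (nonZeroDivisors A) u
    obtain ⟨bv, hbv⟩ := IsLocalization.integerNormalization_map_to_map (nonZeroDivisors A) v
    set U := IsLocalization.integerNormalization (nonZeroDivisors A) u with hU
    set V := IsLocalization.integerNormalization (nonZeroDivisors A) v with hV
    have smul_eq : ∀ (b : A) (p : Polynomial K),
        b • p = Polynomial.C (algebraMap A K b) * p := by
      intro b p
      rw [Algebra.smul_def, IsScalarTower.algebraMap_apply A K (Polynomial K),
        Polynomial.algebraMap_eq]
    have key : (U * g * Polynomial.C (bv : A) + V * h * Polynomial.C (bu : A)).map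
        (algebraMap A K) = Polynomial.C (algebraMap A K ((bu : A) * (bv : A))) := by
      rw [Polynomial.map_add, Polynomial.map_mul, Polynomial.map_mul, Polynomial.map_mul,
        Polynomial.map_mul, Polynomial.map_C, Polynomial.map_C, hbu, hbv, smul_eq, smul_eq,
        map_mul, Polynomial.C_mul]
      calc Polynomial.C (algebraMap A K (bu : A)) * u * Polynomial.map (algebraMap A K) g *
            Polynomial.C (algebraMap A K (bv : A)) +
          Polynomial.C (algebraMap A K (bv : A)) * v * Polynomial.map (algebraMap A K) h *
            Polynomial.C (algebraMap A K (bu : A))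
          = Polynomial.C (algebraMap A K (bu : A)) * Polynomial.C (algebraMap A K (bv : A)) *
            (u * Polynomial.map (algebraMap A K) g + v * Polynomial.map (algebraMap A K) h) := by
            ring
        _ = _ := by rw [huv, mul_one]
    have hmem : U * g * Polynomial.C (bv : A) + V * h * Polynomial.C (bu : A) ∈ J :=
      J.add_mem (J.mul_mem_right _ (J.mul_mem_left _ hgJ))
        (J.mul_mem_right _ (J.mul_mem_left _ hh))
    have hinj : Function.Injective (Polynomial.map (algebraMap A K)) :=
      Polynomial.map_injective _ (IsFractionRing.injective A K)
    have heq : U * g * Polynomial.C (bv : A) + V * h * Polynomial.C (bu : A) =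
        Polynomial.C ((bu : A) * (bv : A)) := by
      apply hinj
      rw [key, Polynomial.map_C]
    rw [heq] at hmem
    have := hconst _ hmem
    exact mul_ne_zero (nonZeroDivisors.ne_zero bu.2) (nonZeroDivisors.ne_zero bv.2) this


/-- If `C` is a circuit of a prime ideal `I` of `F[x_s : s ∈ σ]`, then the elimination
ideal `I ∩ F[x_s : s ∈ C]` is principal, generated by an irreducible polynomial whose
set of variables is exactly `C`. -/
theorem eliminationIdeal_of_circuit_principal {F : Type*} [Field F] {σ : Type*} [Fintype σ]
    [DecidableEq σ] (I : Ideal (MvPolynomial σ F)) (hI : I.IsPrime) (C : Finset σ)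
    (hC : ∃ p ∈ I, p ≠ 0 ∧ p.vars = C)
    (hCmin : ∀ q ∈ I, q ≠ 0 → ¬ q.vars ⊂ C) :
    ∃ g : MvPolynomial {s : σ // s ∈ C} F,
      Irreducible g ∧ g.vars.image Subtype.val = C ∧
      Ideal.comap (MvPolynomial.rename (Subtype.val : {s : σ // s ∈ C} → σ)) I =
        Ideal.span {g} := by
  classical
  obtain ⟨p, hpI, hp0, hpvars⟩ := hC
  set τ := {s : σ // s ∈ C} with hτ
  set J : Ideal (MvPolynomial τ F) :=
    Ideal.comap (MvPolynomial.rename (Subtype.val : τ → σ)) I with hJdef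
  have hrinj : Function.Injective (rename (Subtype.val : τ → σ)) :=
    MvPolynomial.rename_injective (R := F) _ Subtype.val_injective
  haveI hJp : J.IsPrime := hI.comap _
  -- every nonzero element of J has full variable set
  have hvars : ∀ f : MvPolynomial τ F, f ∈ J → f ≠ 0 → f.vars = Finset.univ := by
    intro f hf hf0
    have h1 : rename (Subtype.val : τ → σ) f ∈ I := hf
    have h2 : rename (Subtype.val : τ → σ) f ≠ 0 := by
      intro h; exact hf0 (hrinj (by rw [h, map_zero]))
    have h3 : (rename (Subtype.val : τ → σ) f).vars ⊆ f.vars.image Subtype.val :=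
      vars_rename _ _
    have h4 : (rename (Subtype.val : τ → σ) f).vars ⊆ C := by
      refine h3.trans ?_
      intro x hx
      obtain ⟨s, _, rfl⟩ := Finset.mem_image.mp hx
      exact s.2
    have h6 : (rename (Subtype.val : τ → σ) f).vars = C := by
      by_contra hne
      exact hCmin _ h1 h2 ⟨h4, fun hle => hne (le_antisymm h4 hle)⟩
    refine Finset.eq_univ_iff_forall.mpr fun t => ?_
    have : (t : σ) ∈ f.vars.image Subtype.val := h3 (by rw [h6]; exact t.2)
    obtain ⟨s, hs, hst⟩ := Finset.mem_image.mp this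
    rwa [Subtype.val_injective hst] at hs
  -- J is nonzero
  obtain ⟨p', hp'⟩ := p.exists_rename_eq_of_vars_subset_range (Subtype.val : τ → σ)
    Subtype.val_injective (by rw [hpvars]; intro x hx; exact ⟨⟨x, hx⟩, rfl⟩)
  have hp'J : p' ∈ J := by show rename _ p' ∈ I; rw [hp']; exact hpI
  have hp'0 : p' ≠ 0 := by rintro rfl; rw [map_zero] at hp'; exact hp0 hp'.symm
  have hJne : J ≠ ⊥ := fun h => hp'0 (by simpa [h] using hp'J)
  -- a prime element of J
  obtain ⟨g, hgJ, hg⟩ := hJp.exists_mem_prime_of_ne_bot hJne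
  have hgvars : g.vars = Finset.univ := hvars g hgJ hg.ne_zero
  -- τ is nonempty
  haveI : Nonempty τ := by
    by_contra hne
    haveI : IsEmpty τ := not_nonempty_iff.mp hne
    have h0 : (isEmptyAlgEquiv F τ) g ≠ 0 := by
      intro h
      exact hg.ne_zero ((isEmptyAlgEquiv F τ).injective (by simpa using h))
    have h1 : IsUnit ((isEmptyAlgEquiv F τ) g) := isUnit_iff_ne_zero.mpr h0
    have h2 : IsUnit ((isEmptyAlgEquiv F τ).symm ((isEmptyAlgEquiv F τ) g)) :=
      h1.map (isEmptyAlgEquiv F τ).symm.toAlgHom.toRingHom.toMonoidHom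
    rw [AlgEquiv.symm_apply_apply] at h2
    exact hg.not_unit h2
  obtain ⟨t⟩ := ‹Nonempty τ›
  set τ' := {s : τ // s ≠ t} with hτ'
  set Φ : MvPolynomial τ F ≃ₐ[F] Polynomial (MvPolynomial τ' F) :=
    (renameEquiv F (Equiv.optionSubtypeNe t).symm).trans (optionEquivLeft F τ') with hΦ
  have L1 : ∀ a : MvPolynomial τ' F,
      Φ (rename (Subtype.val : τ' → τ) a) = Polynomial.C a := by
    intro a
    have hext : (Φ.toAlgHom.comp (rename (Subtype.val : τ' → τ)) :
        MvPolynomial τ' F →ₐ[F] Polynomial (MvPolynomial τ' F)) = Polynomial.CAlgHom := by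
      apply MvPolynomial.algHom_ext
      intro s'
      show Φ (rename (Subtype.val : τ' → τ) (X s')) = Polynomial.CAlgHom (X s')
      rw [rename_X]
      show (optionEquivLeft F τ')
        ((renameEquiv F (Equiv.optionSubtypeNe t).symm) (X (s' : τ))) = _
      rw [renameEquiv_apply, rename_X, Equiv.optionSubtypeNe_symm_of_ne s'.2]
      show (optionEquivLeft F τ') (X (some s')) = _
      rw [optionEquivLeft_X_some]
      rfl
    have := DFunLike.congr_fun hext a
    simpa using this
  have hnotC : ∀ b : MvPolynomial τ' F, rename (Subtype.val : τ' → τ) b ∈ J → b = 0 := by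
    intro b hb
    by_contra hb0
    have hbne : rename (Subtype.val : τ' → τ) b ≠ 0 := fun h =>
      hb0 (MvPolynomial.rename_injective (R := F) _ Subtype.val_injective (by rw [h, map_zero]))
    have hbu := hvars _ hb hbne
    have ht : t ∈ (rename (Subtype.val : τ' → τ) b).vars := by
      rw [hbu]; exact Finset.mem_univ t
    obtain ⟨s, _, hst⟩ := mem_vars_rename _ _ ht
    exact s.2 hst
  set J₁ : Ideal (Polynomial (MvPolynomial τ' F)) :=
    J.comap Φ.symm.toAlgHom.toRingHom with hJ₁
  have hmemJ₁ : ∀ x, x ∈ J₁ ↔ Φ.symm x ∈ J := fun x => Iff.rfl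
  have hconst : ∀ a : MvPolynomial τ' F, Polynomial.C a ∈ J₁ → a = 0 := by
    intro a ha
    rw [hmemJ₁, ← L1 a, AlgEquiv.symm_apply_apply] at ha
    exact hnotC a ha
  have hGJ₁ : Φ g ∈ J₁ := by rw [hmemJ₁, AlgEquiv.symm_apply_apply]; exact hgJ
  have hGprime : Prime (Φ g) := by
    have := (MulEquiv.prime_iff Φ.toRingEquiv.toMulEquiv (p := g)).mpr hg
    exact this
  have hGdeg : (Φ g).natDegree ≠ 0 := by
    intro hdeg
    have hCeq : Φ g = Polynomial.C ((Φ g).coeff 0) :=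
      Polynomial.eq_C_of_natDegree_eq_zero hdeg
    have hg' : g = rename (Subtype.val : τ' → τ) ((Φ g).coeff 0) := by
      apply Φ.injective; rw [L1]; exact hCeq
    have h0 : (Φ g).coeff 0 = 0 := hnotC _ (by rw [← hg']; exact hgJ)
    exact hg.ne_zero (by rw [hg', h0, map_zero])
  refine ⟨g, hg.irreducible, ?_, ?_⟩
  · rw [hgvars]
    ext x
    simp only [Finset.mem_image, Finset.mem_univ, true_and]
    constructor
    · rintro ⟨s, rfl⟩; exact s.2
    · intro hx; exact ⟨⟨x, hx⟩, rfl⟩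
  · apply le_antisymm
    · intro h hh
      have hΦh : Φ h ∈ J₁ := by rw [hmemJ₁, AlgEquiv.symm_apply_apply]; exact hh
      obtain ⟨r, hr⟩ := core_dvd hconst hGprime hGJ₁ hGdeg hΦh
      rw [Ideal.mem_span_singleton]
      exact ⟨Φ.symm r, by
        apply Φ.injective
        rw [map_mul, hr, AlgEquiv.apply_symm_apply]⟩
    · rw [Ideal.span_le, Set.singleton_subset_iff]
      exact hgJ
end

section
/- Let F be a field, τ a type, and let f, g be multivariate polynomials in the variables indexed by Option τ over F. Regard f and g as univariate polynomials f₁, g₁ in the distinguished variable x_none with coefficients in the multivariate polynomial ring F[x_t : t ∈ τ], via the canonical algebra isomorphism MvPolynomial (Option τ) F ≃ Polynomial (MvPolynomial τ F). Then the set of variables of the resultant Res(f₁, g₁) ∈ F[x_t : t ∈ τ] is contained in {t ∈ τ : some t ∈ f.vars ∪ g.vars}; that is, the resultant is supported on the union of the variables of f and g with the eliminated variable removed. -/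
open Polynomial

section Aux
open MvPolynomial

theorem optionEquivLeft_coeff_coeff {F : Type*} [Field F] {τ : Type*}
    (m : τ →₀ ℕ) (f : MvPolynomial (Option τ) F) (i : ℕ) :
    coeff m ((optionEquivLeft F τ f).coeff i)
      = coeff (Finsupp.mapDomain Option.some m + Finsupp.single none i) f := by
  induction' f using MvPolynomial.induction_on' with j r p q hp hq generalizing i m
  swap
  · simp only [map_add, Polynomial.coeff_add, MvPolynomial.coeff_add, hp, hq]
  have he : optionEquivLeft F τ (monomial j r)
      = Polynomial.C (monomial j.some r) * Polynomial.X ^ (j none) := by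
    rw [optionEquivLeft_apply, MvPolynomial.aeval_monomial]
    rw [Finsupp.prod_option_index _ _ (fun o => pow_zero _) (fun o m₁ m₂ => pow_add _ _ _)]
    simp only [Option.elim]
    have : (j.some.prod fun a n => (Polynomial.C (X a : MvPolynomial τ F)) ^ n)
        = Polynomial.C (j.some.prod fun a n => (X a : MvPolynomial τ F) ^ n) := by
      rw [Finsupp.prod, Finsupp.prod, map_prod]
      simp
    rw [this, monomial_eq]
    simp only [map_mul, MvPolynomial.algebraMap_eq, Polynomial.algebraMap_apply]
    ring
  classical
  rw [he, Polynomial.coeff_C_mul, Polynomial.coeff_X_pow, mul_ite, mul_one, mul_zero]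
  rw [MvPolynomial.coeff_monomial]
  by_cases h1 : j = Finsupp.mapDomain Option.some m + Finsupp.single none i
  · subst h1
    have hs : (Finsupp.mapDomain Option.some m + Finsupp.single none i).some = m := by
      ext a
      simp [Finsupp.some_apply, Finsupp.mapDomain_apply (Option.some_injective τ)]
    have hn : (Finsupp.mapDomain Option.some m + Finsupp.single none i : Option τ →₀ ℕ) none = i := by
      rw [Finsupp.add_apply, Finsupp.single_apply]
      have : (Finsupp.mapDomain Option.some m : Option τ →₀ ℕ) none = 0 := by
        apply Finsupp.mapDomain_notin_range
        simp
      simp [this]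
    rw [hn, hs]
    simp [MvPolynomial.coeff_monomial]
  · rw [if_neg h1]
    by_cases h2 : j none = i
    · rw [if_pos h2.symm, MvPolynomial.coeff_monomial]
      have : j.some ≠ m := by
        intro hsm
        apply h1
        ext o
        cases o with
        | none => simp [h2, Finsupp.mapDomain_notin_range]
        | some a =>
            rw [← hsm]
            simp [Finsupp.some_apply, Finsupp.mapDomain_apply (Option.some_injective τ)]
      rw [if_neg this]
    · simp [Ne.symm h2]

theorem mem_vars_coeff_optionEquivLeft {F : Type*} [Field F] {τ : Type*}
    {f : MvPolynomial (Option τ) F} {i : ℕ} {t : τ}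
    (h : t ∈ ((optionEquivLeft F τ f).coeff i).vars) : Option.some t ∈ f.vars := by
  rw [MvPolynomial.mem_vars] at h ⊢
  obtain ⟨m, hm, htm⟩ := h
  refine ⟨Finsupp.mapDomain Option.some m + Finsupp.single none i, ?_, ?_⟩
  · rw [MvPolynomial.mem_support_iff, ← _root_.optionEquivLeft_coeff_coeff]
    exact MvPolynomial.mem_support_iff.mp hm
  · classical
    rw [Finsupp.mem_support_iff] at htm ⊢
    rw [Finsupp.add_apply, Finsupp.single_apply,
      Finsupp.mapDomain_apply (Option.some_injective τ)]
    simpa using htm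

theorem mem_vars_det {F : Type*} [Field F] {τ : Type*} [DecidableEq τ] {n : ℕ}
    (M : Matrix (Fin n) (Fin n) (MvPolynomial τ F)) {t : τ}
    (h : t ∈ M.det.vars) : ∃ i j, t ∈ (M i j).vars := by
  rw [Matrix.det_apply] at h
  have h2 := MvPolynomial.vars_sum_subset _ _ h
  rw [Finset.mem_biUnion] at h2
  obtain ⟨σ, -, hσ⟩ := h2
  have hσ' : t ∈ (∏ i, M (σ i) i).vars := by
    rcases Int.units_eq_one_or (Equiv.Perm.sign σ) with hs | hs <;>
      rw [hs] at hσ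
    · simpa using hσ
    · rw [show ((-1 : ℤˣ) • ∏ i, M (σ i) i) = -(∏ i, M (σ i) i) by
        simp [Units.smul_def]] at hσ
      rwa [MvPolynomial.vars_neg] at hσ
  have h3 := MvPolynomial.vars_prod (s := Finset.univ) (fun i => M (σ i) i) hσ'
  rw [Finset.mem_biUnion] at h3
  obtain ⟨i, -, hi⟩ := h3
  exact ⟨σ i, i, hi⟩

end Aux

/-- The Sylvester matrix of two univariate polynomials `f` and `g`: a square matrix of
size `deg f + deg g` whose first `deg g` columns carry the shifted coefficients of `f`
and whose remaining `deg f` columns carry the shifted coefficients of `g`. -/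
noncomputable def sylvesterMatrix {R : Type*} [CommRing R] (f g : R[X]) :
    Matrix (Fin (f.natDegree + g.natDegree)) (Fin (f.natDegree + g.natDegree)) R :=
  Matrix.of fun i j =>
    if (j : ℕ) < g.natDegree then
      if (j : ℕ) ≤ (i : ℕ) ∧ (i : ℕ) ≤ (j : ℕ) + f.natDegree then
        f.coeff ((i : ℕ) - (j : ℕ))
      else 0
    else
      if (j : ℕ) - g.natDegree ≤ (i : ℕ) ∧ (i : ℕ) ≤ ((j : ℕ) - g.natDegree) + g.natDegree then
        g.coeff ((i : ℕ) - ((j : ℕ) - g.natDegree))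
      else 0

/-- The resultant of two univariate polynomials: the determinant of their Sylvester
matrix. -/
noncomputable def resultant {R : Type*} [CommRing R] (f g : R[X]) : R :=
  (sylvesterMatrix f g).det

open MvPolynomial in
/-- Eliminating the distinguished variable `x_none` of two multivariate polynomials
`f, g ∈ F[x_s : s ∈ Option τ]` by taking the resultant with respect to `x_none` (viewing
them as univariate polynomials over `F[x_t : t ∈ τ]` via `optionEquivLeft`) produces a
polynomial supported on the union of the variables of `f` and `g` minus the eliminated
variable. -/
theorem vars_resultant_subset {F : Type*} [Field F] {τ : Type*} [DecidableEq τ]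
    (f g : MvPolynomial (Option τ) F) :
    ∀ t : τ,
      t ∈ (_root_.resultant (optionEquivLeft F τ f) (optionEquivLeft F τ g)).vars →
        Option.some t ∈ f.vars ∪ g.vars := by
  intro t ht
  obtain ⟨i, j, hij⟩ := mem_vars_det _ ht
  simp only [sylvesterMatrix, Matrix.of_apply] at hij
  rw [Finset.mem_union]
  split_ifs at hij with h1 h2 h3
  · exact Or.inl (mem_vars_coeff_optionEquivLeft hij)
  · simp [MvPolynomial.vars_0] at hij
  · exact Or.inr (mem_vars_coeff_optionEquivLeft hij)
  · simp [MvPolynomial.vars_0] at hij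
end

section
/- Let E1 and E2 be two edge sets on a common finite vertex type with a common edge e ∈ E1 ∩ E2, and suppose |E1| ≥ 2|V(E1)| − 2, |E2| ≥ 2|V(E2)| − 2, and |E1 ∩ E2| ≤ 2|V(E1) ∩ V(E2)| − 3. Then |(E1 ∪ E2) \ {e}| ≥ 2|V(E1) ∪ V(E2)| − 2. -/
open Finset

variable {V : Type*} [Fintype V] [DecidableEq V]

/-- Counting lemma: if `|E1| ≥ 2|V(E1)| - 2`, `|E2| ≥ 2|V(E2)| - 2` and
`|E1 ∩ E2| ≤ 2|V(E1) ∩ V(E2)| - 3`, then `|(E1 ∪ E2) \ {e}| ≥ 2|V(E1) ∪ V(E2)| - 2`. -/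
theorem card_union_sdiff_ge (E1 E2 : Finset (Sym2 V))
    (hE1 : IsEdgeSet E1) (hE2 : IsEdgeSet E2)
    (e : Sym2 V) (he : e ∈ E1 ∩ E2)
    (h1 : 2 * ((vertexSpan E1).card : ℤ) - 2 ≤ (E1.card : ℤ))
    (h2 : 2 * ((vertexSpan E2).card : ℤ) - 2 ≤ (E2.card : ℤ))
    (h12 : ((E1 ∩ E2).card : ℤ) ≤ 2 * ((vertexSpan E1 ∩ vertexSpan E2).card : ℤ) - 3) :
    2 * ((vertexSpan E1 ∪ vertexSpan E2).card : ℤ) - 2 ≤ (((E1 ∪ E2) \ {e}).card : ℤ) := by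
  have hE : ((E1 ∪ E2).card : ℤ) + ((E1 ∩ E2).card : ℤ) = E1.card + E2.card := by
    exact_mod_cast congrArg Nat.cast (Finset.card_union_add_card_inter E1 E2)
  have hV : ((vertexSpan E1 ∪ vertexSpan E2).card : ℤ) + ((vertexSpan E1 ∩ vertexSpan E2).card : ℤ)
      = (vertexSpan E1).card + (vertexSpan E2).card := by
    exact_mod_cast congrArg Nat.cast (Finset.card_union_add_card_inter (vertexSpan E1) (vertexSpan E2))
  have hsub : {e} ⊆ E1 ∪ E2 := by
    simp only [Finset.singleton_subset_iff, Finset.mem_union]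
    exact Or.inl (Finset.mem_inter.mp he).1
  have hsd : (((E1 ∪ E2) \ {e}).card : ℤ) = ((E1 ∪ E2).card : ℤ) - 1 := by
    rw [Finset.card_sdiff_of_subset hsub]
    have : 1 ≤ (E1 ∪ E2).card := Finset.card_le_card hsub
    simp only [Finset.card_singleton]
    omega
  linarith
end
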